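/- Let d ≥ 4, let P be a simplicial d-polytope with graph G, and let D = E(X, X̄) be a nontrivial minimum edge cut of G for some X ⊆ V(G). For every vertex w ∈ X incident with an edge of D such that 1 ≤ |N_X̄(w)| ≤ d − 2, every vertex of N_X̄(w) is incident with at least d + 1 − |N_X̄(w)| edges of D. Similarly, for every vertex z ∈ V(G)∖X incident with an edge of D such that 1 ≤ |N_X(z)| ≤ d − 2, every vertex of N_X(z) is incident with at least d + 1 − |N_X(z)| edges of D. -/

import Mathlib

noncomputable section

/-- Abbreviation for Euclidean space `ℝ^n`. -/
abbrev Euc (n : ℕ) := EuclideanSpace ℝ (Fin n)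

/-- A polytope is the convex hull of a finite set of points. -/
def IsPolytope {n : ℕ} (P : Set (Euc n)) : Prop :=
  ∃ S : Finset (Euc n), P = convexHull ℝ (S : Set (Euc n))

/-- The dimension of a set of points: the dimension of its affine span. -/
noncomputable def polyDim {n : ℕ} (P : Set (Euc n)) : ℕ :=
  Module.finrank ℝ (affineSpan ℝ P).direction

/-- `F` is an (exposed) face of `P`: `P` itself, or the intersection of `P` with
a hyperplane that has `P` in one of its closed halfspaces. -/
def IsFaceOf {n : ℕ} (P F : Set (Euc n)) : Prop :=
  F = P ∨ ∃ (f : Euc n →ₗ[ℝ] ℝ) (c : ℝ), f ≠ 0 ∧ (∀ x ∈ P, f x ≤ c) ∧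
    F = {x ∈ P | f x = c}

/-- A vertex of `P`: a point whose singleton is a (0-dimensional) face of `P`. -/
def IsVertexOf {n : ℕ} (P : Set (Euc n)) (v : Euc n) : Prop :=
  IsFaceOf P {v}

/-- A facet of `P`: a nonempty face of dimension one less than that of `P`. -/
def IsFacetOf {n : ℕ} (P F : Set (Euc n)) : Prop :=
  IsFaceOf P F ∧ F.Nonempty ∧ polyDim F + 1 = polyDim P

/-- A simplicial `d`-polytope: a polytope of dimension `d` each of whose facets has
exactly `d` vertices. -/
def IsSimplicialPolytope {n : ℕ} (P : Set (Euc n)) (d : ℕ) : Prop :=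
  IsPolytope P ∧ polyDim P = d ∧
    ∀ F, IsFacetOf P F → {v | IsVertexOf F v}.ncard = d

/-- The graph of a polytope `P`: vertices are the vertices of `P`, two of them being
adjacent exactly when the segment joining them is an edge (1-dimensional face) of `P`. -/
def polytopeGraph {n : ℕ} (P : Set (Euc n)) :
    SimpleGraph {v : Euc n // IsVertexOf P v} where
  Adj x y := x ≠ y ∧ IsFaceOf P (segment ℝ (x : Euc n) (y : Euc n))
  symm := ⟨by
    rintro x y ⟨hxy, hseg⟩
    refine ⟨hxy.symm ∘ Eq.symm ∘ Eq.symm, ?_⟩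
    · rwa [segment_symm]⟩
  loopless := ⟨by rintro x ⟨hxx, _⟩; exact hxx rfl⟩

/-- `E(X, X̄)`: the set of edges of `G` with one endpoint in `X` and the other outside `X`. -/
def cutEdges {V : Type*} (G : SimpleGraph V) (X : Set V) : Set (Sym2 V) :=
  {e | ∃ x y, G.Adj x y ∧ x ∈ X ∧ y ∉ X ∧ e = s(x, y)}

/-- An edge cut of `G`: a set of edges of the form `E(X, X̄)` for a nonempty proper
subset `X` of the vertices, whose removal separates two vertices of `G`. -/
def IsEdgeCut {V : Type*} (G : SimpleGraph V) (D : Set (Sym2 V)) : Prop :=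
  ∃ X : Set V, X.Nonempty ∧ Xᶜ.Nonempty ∧ D = cutEdges G X ∧
    ∃ x y : V, ¬ (G.deleteEdges D).Reachable x y

/-- A minimum edge cut: an edge cut of least cardinality. -/
def IsMinEdgeCut {V : Type*} (G : SimpleGraph V) (D : Set (Sym2 V)) : Prop :=
  IsEdgeCut G D ∧ ∀ D' : Set (Sym2 V), IsEdgeCut G D' → D.ncard ≤ D'.ncard

/-- A trivial edge cut: the set of all edges incident with a single vertex. -/
def IsTrivialEdgeCut {V : Type*} (G : SimpleGraph V) (D : Set (Sym2 V)) : Prop :=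
  ∃ v : V, D = G.incidenceSet v

/-- `G` is `r`-edge-connected: no two vertices are separated by removing fewer than
`r` edges. -/
def EdgeConnectedGE {V : Type*} (G : SimpleGraph V) (r : ℕ) : Prop :=
  ∀ D : Finset (Sym2 V), D.card < r →
    ∀ x y : V, (G.deleteEdges (D : Set (Sym2 V))).Reachable x y

/-- The set of vertices incident with an edge of `D`. -/
def cutVerts {V : Type*} (D : Set (Sym2 V)) : Set V :=
  {v | ∃ e ∈ D, v ∈ e}




variable {n : ℕ}

local instance : DecidableEq (Euc n) := Classical.decEq _

/-- bound of linear functional on convex hull -/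
lemma hull_bound {S : Finset (Euc n)} {f : Euc n →ₗ[ℝ] ℝ} {c : ℝ}
    (h : ∀ s ∈ S, f s ≤ c) : ∀ x ∈ convexHull ℝ (S : Set (Euc n)), f x ≤ c := by
  intro x hx
  have : convexHull ℝ (S : Set (Euc n)) ⊆ {y | f y ≤ c} := by
    apply convexHull_min _ (convex_halfSpace_le (f := f) ⟨f.map_add, f.map_smul⟩ c)
    intro s hs; exact h s hs
  exact this hx

/-- support lemma: if a linear functional attains its max on a hull, the point is in
the hull of the maximizers -/
lemma support_lemma {S : Finset (Euc n)} {f : Euc n →ₗ[ℝ] ℝ} {c : ℝ}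
    (h : ∀ s ∈ S, f s ≤ c) {x : Euc n} (hx : x ∈ convexHull ℝ (S : Set (Euc n)))
    (hfx : f x = c) :
    x ∈ convexHull ℝ ((S.filter (fun s => f s = c)) : Set (Euc n)) := by
  rw [Finset.mem_convexHull'] at hx
  obtain ⟨w, hw0, hw1, hwx⟩ := hx
  have hfs : ∑ y ∈ S, w y * f y = c := by
    have := congrArg f hwx
    rw [map_sum] at this
    simp only [map_smul, smul_eq_mul] at this
    rw [this, hfx]
  have hzero : ∑ y ∈ S, w y * (c - f y) = 0 := by
    have e1 : ∀ y ∈ S, w y * (c - f y) = w y * c - w y * f y := by intro y _; ring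
    rw [Finset.sum_congr rfl e1, Finset.sum_sub_distrib, ← Finset.sum_mul, hw1, one_mul, hfs,
      sub_self]
  have hterm : ∀ y ∈ S, w y * (c - f y) = 0 := by
    intro y hy
    have := (Finset.sum_eq_zero_iff_of_nonneg ?_).mp hzero y hy
    · exact this
    · intro z hz; exact mul_nonneg (hw0 z hz) (by linarith [h z hz])
  have hkey : ∀ y ∈ S, f y ≠ c → w y = 0 := by
    intro y hy hne
    rcases mul_eq_zero.mp (hterm y hy) with h1 | h2
    · exact h1
    · exact absurd (by linarith [sub_eq_zero.mp h2] : f y = c) hne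
  rw [Finset.mem_convexHull']
  refine ⟨w, fun y hy => hw0 y (Finset.mem_of_mem_filter y hy), ?_, ?_⟩
  · rw [← hw1]
    exact Finset.sum_filter_of_ne (fun y hy hne => by
      by_contra hfy
      exact hne (hkey y hy hfy))
  · rw [← hwx]
    exact Finset.sum_filter_of_ne (fun y hy hne => by
      by_contra hfy
      exact hne (by rw [hkey y hy hfy, zero_smul]))

/-- value of functional on hull of points where it is constant -/
lemma hull_const {S : Finset (Euc n)} {f : Euc n →ₗ[ℝ] ℝ} {c : ℝ}
    (h : ∀ s ∈ S, f s = c) {x : Euc n} (hx : x ∈ convexHull ℝ (S : Set (Euc n))) :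
    f x = c := by
  have h1 := hull_bound (f := f) (c := c) (fun s hs => le_of_eq (h s hs)) x hx
  have h2 := hull_bound (f := -f) (c := -c) (fun s hs => by simp [h s hs]) x hx
  simp only [LinearMap.neg_apply, neg_le_neg_iff] at h2
  linarith

/-- carrier of an exposed face -/
lemma face_carrier {S : Finset (Euc n)} {P : Set (Euc n)}
    (hS : P = convexHull ℝ (S : Set (Euc n))) {f : Euc n →ₗ[ℝ] ℝ} {c : ℝ}
    (hle : ∀ x ∈ P, f x ≤ c) :
    {x ∈ P | f x = c} = convexHull ℝ ((S.filter (fun s => f s = c)) : Set (Euc n)) := by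
  have hSle : ∀ s ∈ S, f s ≤ c := fun s hs =>
    hle s (by rw [hS]; exact subset_convexHull ℝ _ hs)
  apply Set.Subset.antisymm
  · rintro x ⟨hxP, hfx⟩
    exact support_lemma hSle (hS ▸ hxP) hfx
  · intro x hx
    have hxP : x ∈ P := by
      rw [hS]
      exact convexHull_mono (by intro s hs; exact Finset.mem_of_mem_filter s hs) hx
    refine ⟨hxP, ?_⟩
    exact hull_const (fun s hs => (Finset.mem_filter.mp hs).2) hx

lemma IsFaceOf.subset {P F : Set (Euc n)} (h : IsFaceOf P F) : F ⊆ P := by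
  rcases h with rfl | ⟨f, c, _, _, rfl⟩
  · exact le_refl _
  · exact Set.sep_subset _ _

/-- a face of a polytope is a polytope, with carrier a subset of the original -/
lemma face_polytope {S : Finset (Euc n)} {P F : Set (Euc n)}
    (hS : P = convexHull ℝ (S : Set (Euc n))) (hF : IsFaceOf P F) :
    ∃ T : Finset (Euc n), T ⊆ S ∧ F = convexHull ℝ (T : Set (Euc n)) := by
  rcases hF with rfl | ⟨f, c, _, hle, rfl⟩
  · exact ⟨S, le_refl _, hS⟩
  · exact ⟨S.filter (fun s => f s = c), Finset.filter_subset _ _, face_carrier hS hle⟩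

/-- a face of a face is a face -/
lemma face_trans {P F G : Set (Euc n)} (hP : IsPolytope P)
    (hF : IsFaceOf P F) (hG : IsFaceOf F G) : IsFaceOf P G := by
  obtain ⟨S, hS⟩ := hP
  rcases hG with rfl | ⟨g, c', hg0, hgle, rfl⟩
  · exact hF
  rcases hF with rfl | ⟨f, c, hf0, hfle, rfl⟩
  · exact Or.inr ⟨g, c', hg0, hgle, rfl⟩
  -- main case
  set A := S.filter (fun s => f s = c) with hA
  have hFA : {x ∈ P | f x = c} = convexHull ℝ (A : Set (Euc n)) := face_carrier hS hfle
  -- choose ε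
  set Bad := S.filter (fun s => f s < c ∧ c' < g s) with hBad
  set ε₀ : ℝ := if hne : Bad.Nonempty then Bad.inf' hne (fun s => (c - f s) / (g s - c')) else 1
    with hε₀
  have hε₀pos : 0 < ε₀ := by
    rw [hε₀]
    split
    · rename_i hne
      rw [Finset.lt_inf'_iff]
      intro s hs
      obtain ⟨_, h1, h2⟩ := Finset.mem_filter.mp hs
      exact div_pos (by linarith) (by linarith)
    · norm_num
  -- pick ε among ε₀/2, ε₀/3 such that f + ε g ≠ 0
  have hεchoice : ∃ ε : ℝ, 0 < ε ∧ ε < ε₀ ∧ f + ε • g ≠ 0 := by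
    by_cases h2 : f + (ε₀/2) • g = 0
    · refine ⟨ε₀/3, by linarith, by linarith, ?_⟩
      intro h3
      have : (ε₀/2 - ε₀/3) • g = 0 := by
        have := sub_eq_zero.mpr (h2.trans h3.symm)
        rw [add_sub_add_left_eq_sub] at this
        exact (sub_smul _ _ _).trans this
      have hgz : g = 0 := by
        rcases smul_eq_zero.mp this with h | h
        · exact absurd h (ne_of_gt (by linarith : (0:ℝ) < ε₀/2 - ε₀/3))
        · exact h
      rw [hgz, smul_zero, add_zero] at h2
      exact hf0 h2
    · exact ⟨ε₀/2, by linarith, by linarith, h2⟩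
  obtain ⟨ε, hεpos, hεlt, hεne⟩ := hεchoice
  refine Or.inr ⟨f + ε • g, c + ε * c', hεne, ?_, ?_⟩
  all_goals {
    have key : ∀ s ∈ S, (f s + ε * g s ≤ c + ε * c') ∧
        ((f s + ε * g s = c + ε * c') ↔ (f s = c ∧ g s = c')) := by
      intro s hs
      have hsP : s ∈ P := by rw [hS]; exact subset_convexHull ℝ _ hs
      have hfs : f s ≤ c := hfle s hsP
      rcases eq_or_lt_of_le hfs with heq | hlt
      · -- s ∈ A, so s ∈ F, so g s ≤ c'
        have hsF : s ∈ {x ∈ P | f x = c} := ⟨hsP, heq⟩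
        have hgs : g s ≤ c' := hgle s hsF
        constructor
        · nlinarith
        · constructor
          · intro h; constructor
            · exact heq
            · nlinarith
          · rintro ⟨h1, h2⟩; rw [h1, h2]
      · -- f s < c strictly
        have hstrict : f s + ε * g s < c + ε * c' := by
          by_cases hgs : g s ≤ c'
          · nlinarith
          · push_neg at hgs
            have hsBad : s ∈ Bad := Finset.mem_filter.mpr ⟨hs, hlt, hgs⟩
            have hBne : Bad.Nonempty := ⟨s, hsBad⟩
            have hε₀le : ε₀ ≤ (c - f s) / (g s - c') := by
              rw [hε₀, dif_pos hBne]
              exact Finset.inf'_le _ hsBad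
            have : ε < (c - f s) / (g s - c') := lt_of_lt_of_le hεlt hε₀le
            have : ε * (g s - c') < c - f s := by
              rw [lt_div_iff₀ (by linarith)] at this
              linarith
            nlinarith
        exact ⟨le_of_lt hstrict, ⟨fun h => absurd h (ne_of_lt hstrict),
          fun h => absurd h.1 (ne_of_lt hlt)⟩⟩
    -- bound on P
    have hbound : ∀ x ∈ P, (f + ε • g) x ≤ c + ε * c' := by
      intro x hx
      have : ∀ s ∈ S, (f + ε • g) s ≤ c + ε * c' := by
        intro s hs
        simpa using (key s hs).1
      exact hull_bound this x (hS ▸ hx)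
    first
    | exact hbound
    | { -- set equality
      apply Set.Subset.antisymm
      · rintro x ⟨⟨hxP, hfx⟩, hgx⟩
        exact ⟨hxP, by simp [hfx, hgx]⟩
      · rintro x ⟨hxP, hx⟩
        simp only [LinearMap.add_apply, LinearMap.smul_apply, smul_eq_mul] at hx
        -- use support lemma with f + ε g on S
        have hSle : ∀ s ∈ S, (f + ε • g) s ≤ c + ε * c' := fun s hs => by
          simpa using (key s hs).1
        have hxin := support_lemma hSle (hS ▸ hxP) (by simpa using hx)
        set T := S.filter (fun s => (f + ε • g) s = c + ε * c') with hT
        have hTsub : ∀ s ∈ T, f s = c ∧ g s = c' := by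
          intro s hsT
          obtain ⟨hsS, hval⟩ := Finset.mem_filter.mp hsT
          simp only [LinearMap.add_apply, LinearMap.smul_apply, smul_eq_mul] at hval
          exact ((key s hsS).2).mp hval
        have hfx : f x = c := hull_const (fun s hs => (hTsub s hs).1) hxin
        have hgx : g x = c' := hull_const (fun s hs => (hTsub s hs).2) hxin
        exact ⟨⟨hxP, hfx⟩, hgx⟩ }
  }

lemma vertex_mem {P : Set (Euc n)} {v : Euc n} (h : IsVertexOf P v) : v ∈ P :=
  h.subset rfl

/-- vertices of a polytope belong to any generating finite set -/
lemma vertex_mem_carrier {S : Finset (Euc n)} {P : Set (Euc n)}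
    (hS : P = convexHull ℝ (S : Set (Euc n))) {v : Euc n} (h : IsVertexOf P v) :
    v ∈ S := by
  rcases h with h | ⟨f, c, _, hle, h⟩
  · -- {v} = P
    have hvP : v ∈ P := h ▸ rfl
    have hSne : S.Nonempty := by
      by_contra hne
      rw [Finset.not_nonempty_iff_eq_empty] at hne
      rw [hne] at hS
      simp at hS
      rw [hS] at hvP
      exact hvP
    obtain ⟨s, hs⟩ := hSne
    have : s ∈ P := hS ▸ subset_convexHull ℝ _ hs
    rw [← h] at this
    rwa [Set.mem_singleton_iff.mp this] at hs
  · have hcar := face_carrier hS hle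
    rw [← h] at hcar
    have hvfil : v ∈ (S.filter (fun s => f s = c)) := by
      have hvin : v ∈ convexHull ℝ ((S.filter (fun s => f s = c)) : Set (Euc n)) :=
        hcar ▸ rfl
      have hne : (S.filter (fun s => f s = c)).Nonempty := by
        by_contra hne
        rw [Finset.not_nonempty_iff_eq_empty] at hne
        rw [hne] at hvin; simp at hvin
      obtain ⟨s, hs⟩ := hne
      have hsv : s ∈ ({v} : Set (Euc n)) := by
        rw [hcar]; exact subset_convexHull ℝ _ hs
      rwa [← Set.mem_singleton_iff.mp hsv]
    exact Finset.mem_of_mem_filter v hvfil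

lemma vertexSet_finite {P : Set (Euc n)} (hP : IsPolytope P) :
    {v | IsVertexOf P v}.Finite := by
  obtain ⟨S, hS⟩ := hP
  exact Set.Finite.subset S.finite_toSet (fun v hv => vertex_mem_carrier hS hv)

/-- every polytope is the hull of its vertex set -/
lemma conv_vertices {P : Set (Euc n)} (hP : IsPolytope P) :
    P = convexHull ℝ {v | IsVertexOf P v} := by
  obtain ⟨S, hS⟩ := hP
  apply Set.Subset.antisymm
  · -- P ⊆ conv(vertices), by strong induction on generating sets
    suffices h : ∀ (T : Finset (Euc n)), convexHull ℝ (T : Set (Euc n)) = P →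
        P ⊆ convexHull ℝ {v | IsVertexOf P v} by
      exact h S hS.symm
    intro T
    induction T using Finset.strongInduction with
    | _ T ih =>
      intro hT
      by_cases hvert : ∀ t ∈ T, IsVertexOf P t
      · intro x hx
        rw [← hT] at hx
        exact convexHull_mono (fun t ht => hvert t ht) hx
      · push_neg at hvert
        obtain ⟨t, htT, htnv⟩ := hvert
        have ht_in : t ∈ convexHull ℝ ((T.erase t : Finset (Euc n)) : Set (Euc n)) := by
          by_contra hnot
          apply htnv
          -- t is a vertex: separate it
          by_cases hTe : (T.erase t) = ∅
          · -- T = {t}, P = {t}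
            have hT1 : T = {t} := by
              ext s; simp only [Finset.mem_singleton]
              constructor
              · intro hs
                by_contra hne
                exact absurd (Finset.mem_erase.mpr ⟨hne, hs⟩) (by rw [hTe]; simp)
              · rintro rfl; exact htT
            have : P = {t} := by
              rw [← hT, hT1]; simp
            exact Or.inl this.symm
          · have hTe_ne : ((T.erase t : Finset (Euc n)) : Set (Euc n)).Nonempty := by
              rw [Set.nonempty_iff_ne_empty]
              intro h; apply hTe
              exact_mod_cast Finset.coe_injective (by simpa using h)
            obtain ⟨f, u, hfu, hut⟩ := geometric_hahn_banach_closed_point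
              (convex_convexHull ℝ _)
              ((T.erase t).finite_toSet.isClosed_convexHull ℝ) hnot
            refine Or.inr ⟨f.toLinearMap, f t, ?_, ?_, ?_⟩
            · -- f ≠ 0
              obtain ⟨s, hs⟩ := hTe_ne
              have := hfu s (subset_convexHull ℝ _ hs)
              intro hf0
              have : f.toLinearMap s = f.toLinearMap t := by rw [hf0]; simp
              simp only [ContinuousLinearMap.coe_coe] at this
              linarith
            · -- bound
              intro x hx
              rw [← hT] at hx
              refine hull_bound (S := T) (f := f.toLinearMap) (c := f t) ?_ x hx
              intro s hsT
              by_cases hst : s = t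
              · rw [hst]; exact le_rfl
              · have : s ∈ T.erase t := Finset.mem_erase.mpr ⟨hst, hsT⟩
                exact le_of_lt (lt_trans (hfu s (subset_convexHull ℝ _ this)) hut)
            · -- {t} = {x ∈ P | f x = f t}
              apply Set.Subset.antisymm
              · intro x hx
                rw [Set.mem_singleton_iff.mp hx]
                exact ⟨hT ▸ subset_convexHull ℝ _ htT, rfl⟩
              · rintro x ⟨hxP, hfx⟩
                rw [← hT] at hxP
                have hSle : ∀ s ∈ T, f.toLinearMap s ≤ f t := by
                  intro s hsT
                  by_cases hst : s = t
                  · rw [hst]; exact le_rfl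
                  · have : s ∈ T.erase t := Finset.mem_erase.mpr ⟨hst, hsT⟩
                    exact le_of_lt (lt_trans (hfu s (subset_convexHull ℝ _ this)) hut)
                have hxin := support_lemma hSle hxP hfx
                have hfil : T.filter (fun s => f.toLinearMap s = f t) ⊆ {t} := by
                  intro s hs
                  obtain ⟨hsT, hval⟩ := Finset.mem_filter.mp hs
                  simp only [Finset.mem_singleton]
                  by_contra hst
                  have : s ∈ T.erase t := Finset.mem_erase.mpr ⟨hst, hsT⟩
                  have := hfu s (subset_convexHull ℝ _ this)
                  simp only [ContinuousLinearMap.coe_coe] at hval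
                  linarith
                have : x ∈ convexHull ℝ ({t} : Set (Euc n)) := by
                  refine convexHull_mono ?_ hxin
                  exact_mod_cast hfil
                simpa using this
        -- t ∈ conv(erase): recurse
        have hconv_eq : convexHull ℝ ((T.erase t : Finset (Euc n)) : Set (Euc n)) = P := by
          apply Set.Subset.antisymm
          · rw [← hT]; exact convexHull_mono (by simp [Finset.erase_subset])
          · rw [← hT]
            apply convexHull_min _ (convex_convexHull ℝ _)
            intro s hsT
            by_cases hst : s = t
            · rwa [hst]
            · exact subset_convexHull ℝ _ (Finset.mem_erase.mpr ⟨hst, hsT⟩)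
        exact ih (T.erase t) (Finset.erase_ssubset htT) hconv_eq
  · -- conv(vertices) ⊆ P
    have : {v | IsVertexOf P v} ⊆ P := fun v hv => vertex_mem hv
    rw [hS]
    exact convexHull_min (by rw [← hS]; exact this) (convex_convexHull ℝ _)

lemma polyDim_mono {A B : Set (Euc n)} (h : A ⊆ B) : polyDim A ≤ polyDim B :=
  Submodule.finrank_mono (AffineSubspace.direction_le (affineSpan_mono ℝ h))

lemma polyDim_segment_le (w v : Euc n) : polyDim (segment ℝ w v) ≤ 1 := by
  rw [← convexHull_pair] at *
  unfold polyDim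
  rw [affineSpan_convexHull, direction_affineSpan, vectorSpan_pair]
  apply le_trans (finrank_span_le_card _)
  simp

lemma mem_affineSpan_of_subset_hyperplane {A : Set (Euc n)} {f : Euc n →ₗ[ℝ] ℝ} {c : ℝ}
    (hA : ∀ x ∈ A, f x = c) : ∀ x ∈ affineSpan ℝ A, f x = c := by
  intro x hx
  let W : AffineSubspace ℝ (Euc n) :=
    { carrier := {y | f y = c}
      smul_vsub_vadd_mem' := by
        intro r p₁ p₂ p₃ h1 h2 h3
        simp only [Set.mem_setOf_eq] at *
        simp [vsub_eq_sub, vadd_eq_add, map_add, map_smul, map_sub, h1, h2, h3] }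
  have : affineSpan ℝ A ≤ W := affineSpan_le.mpr (fun y hy => hA y hy)
  exact this hx

/-- a nonempty exposed face is either everything or has smaller dimension -/
lemma face_dim_lt {P F : Set (Euc n)} (hP : IsPolytope P) (hF : IsFaceOf P F)
    (hne : F.Nonempty) : F = P ∨ polyDim F < polyDim P := by
  rcases hF with rfl | ⟨f, c, hf0, hle, rfl⟩
  · exact Or.inl rfl
  by_cases hlt : polyDim {x ∈ P | f x = c} < polyDim P
  · exact Or.inr hlt
  push_neg at hlt
  left
  have hsub : {x ∈ P | f x = c} ⊆ P := Set.sep_subset _ _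
  have hdirle : (affineSpan ℝ {x ∈ P | f x = c}).direction ≤ (affineSpan ℝ P).direction :=
    AffineSubspace.direction_le (affineSpan_mono ℝ hsub)
  have hdeq : (affineSpan ℝ {x ∈ P | f x = c}).direction = (affineSpan ℝ P).direction :=
    Submodule.eq_of_le_of_finrank_le hdirle hlt
  -- direction of P is inside ker f
  have hFdir : (affineSpan ℝ P).direction ≤ LinearMap.ker f := by
    rw [← hdeq, direction_affineSpan]
    rw [vectorSpan_def]
    rw [Submodule.span_le]
    rintro z ⟨x, hx, y, hy, rfl⟩
    simp only [SetLike.mem_coe, LinearMap.mem_ker, vsub_eq_sub, map_sub]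
    rw [hx.2, hy.2, sub_self]
  -- so f is constant on P
  obtain ⟨x₀, hx₀⟩ := hne
  apply Set.Subset.antisymm hsub
  intro x hxP
  refine ⟨hxP, ?_⟩
  have hx₀P : x₀ ∈ P := hx₀.1
  have : x - x₀ ∈ LinearMap.ker f := by
    apply hFdir
    rw [direction_affineSpan]
    exact vsub_mem_vectorSpan ℝ hxP hx₀P
  rw [LinearMap.mem_ker, map_sub, sub_eq_zero] at this
  rw [this, hx₀.2]

lemma polyDim_insert_le {A : Set (Euc n)} (hA : A.Nonempty) (p : Euc n) :
    polyDim (insert p A) ≤ polyDim A + 1 := by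
  obtain ⟨a, ha⟩ := hA
  unfold polyDim
  have h1 : affineSpan ℝ (insert p A) =
      affineSpan ℝ (insert p ((affineSpan ℝ A : AffineSubspace ℝ (Euc n)) : Set (Euc n))) := by
    rw [affineSpan_insert_affineSpan]
  rw [h1, AffineSubspace.direction_affineSpan_insert (subset_affineSpan ℝ A ha)]
  have := Submodule.finrank_sup_add_finrank_inf_eq
    (Submodule.span ℝ {p -ᵥ a}) (affineSpan ℝ A).direction
  have hsingle : Module.finrank ℝ (Submodule.span ℝ {p -ᵥ a}) ≤ 1 := by
    apply le_trans (finrank_span_le_card _)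
    simp
  omega

/-- a linear functional constant on an affine span, with value +1 at an external point -/
lemma exists_orth_functional {A : Set (Euc n)} {a : Euc n} (ha : a ∈ A) {p : Euc n}
    (hp : p ∉ affineSpan ℝ A) :
    ∃ (g : Euc n →ₗ[ℝ] ℝ) (γ : ℝ), (∀ x ∈ affineSpan ℝ A, g x = γ) ∧ g p = γ + 1 := by
  set U : Submodule ℝ (Euc n) := (affineSpan ℝ A).direction with hU
  set v : Euc n := (p - a) - ((U.orthogonalProjection) (p - a) : Euc n) with hv
  have hvU : v ∈ Uᗮ := U.sub_starProjection_mem_orthogonal (p - a)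
  have hvne : v ≠ 0 := by
    intro h0
    apply hp
    have hpa : p - a ∈ U := by
      have heq : (p - a) = ((U.orthogonalProjection) (p - a) : Euc n) := by
        rw [← sub_eq_zero]; exact h0
      rw [heq]; exact Submodule.coe_mem _
    have haA : a ∈ affineSpan ℝ A := subset_affineSpan ℝ A ha
    have hmem := AffineSubspace.vadd_mem_of_mem_direction hpa haA
    simpa [vadd_eq_add, sub_add_cancel] using hmem
  set g : Euc n →ₗ[ℝ] ℝ := (‖v‖^2)⁻¹ • (innerSL ℝ v).toLinearMap with hg
  have hgval : ∀ x : Euc n, g x = (‖v‖^2)⁻¹ * (inner ℝ v x : ℝ) := by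
    intro x; simp [hg]
  refine ⟨g, g a, ?_, ?_⟩
  · intro x hx
    have hxa : x - a ∈ U := by
      rw [hU, AffineSubspace.mem_direction_iff_eq_vsub] at *
      · exact ⟨x, hx, a, subset_affineSpan ℝ A ha, rfl⟩
      · exact ⟨a, subset_affineSpan ℝ A ha⟩
    have hinner : (inner ℝ v (x - a) : ℝ) = 0 := by rw [real_inner_comm]; exact hvU (x - a) hxa
    have : g (x - a) = 0 := by rw [hgval, hinner, mul_zero]
    rw [map_sub, sub_eq_zero] at this
    exact this
  · have hproj : ((U.orthogonalProjection) (p - a) : Euc n) ∈ U := Submodule.coe_mem _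
    have hinner : (inner ℝ v (p - a) : ℝ) = ‖v‖^2 := by
      have hdecomp : p - a = v + ((U.orthogonalProjection) (p - a) : Euc n) := by
        rw [hv]; abel
      rw [hdecomp, inner_add_right]
      have h1 : (inner ℝ v ((U.orthogonalProjection (p - a)) : Euc n) : ℝ) = 0 := by
        rw [real_inner_comm]; exact hvU _ hproj
      rw [h1, add_zero, real_inner_self_eq_norm_sq]
    have : g (p - a) = 1 := by
      rw [hgval, hinner]
      have hne0 : ‖v‖^2 ≠ 0 := pow_ne_zero _ (norm_ne_zero_iff.mpr hvne)
      field_simp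
    rw [map_sub, sub_eq_iff_eq_add] at this
    rw [this]; ring

set_option maxHeartbeats 2000000 in
/-- key growth lemma: a proper exposed face of codimension ≥ 2 is strictly contained in
another proper face -/
lemma growth {S : Finset (Euc n)} {P : Set (Euc n)}
    (hS : P = convexHull ℝ (S : Set (Euc n)))
    {f : Euc n →ₗ[ℝ] ℝ} {c : ℝ} (hle : ∀ x ∈ P, f x ≤ c)
    (hGne : {x ∈ P | f x = c}.Nonempty) (hGP : {x ∈ P | f x = c} ≠ P)
    (hdim : polyDim {x ∈ P | f x = c} + 2 ≤ polyDim P) :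
    ∃ G', IsFaceOf P G' ∧ {x ∈ P | f x = c} ⊆ G' ∧ G' ≠ P ∧ G' ≠ {x ∈ P | f x = c} := by
  set G := {x ∈ P | f x = c} with hG
  obtain ⟨a, haG⟩ := hGne
  have haP : a ∈ P := haG.1
  have hmemP : ∀ s ∈ S, s ∈ P := fun s hs => hS ▸ subset_convexHull ℝ _ hs
  have hSle : ∀ s ∈ S, f s ≤ c := fun s hs => hle s (hmemP s hs)
  have haff : ∀ x ∈ affineSpan ℝ G, f x = c :=
    mem_affineSpan_of_subset_hyperplane (fun x hx => hx.2)
  -- B nonempty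
  have hBex : ∃ s₀ ∈ S, f s₀ < c := by
    by_contra hno
    push_neg at hno
    apply hGP
    apply Set.Subset.antisymm (Set.sep_subset _ _)
    intro x hxP
    exact ⟨hxP, hull_const (fun s hs => le_antisymm (hSle s hs) (hno s hs)) (hS ▸ hxP)⟩
  obtain ⟨s₀, hs₀S, hs₀lt⟩ := hBex
  have hs₀nspan : s₀ ∉ affineSpan ℝ G := fun hmem => absurd (haff s₀ hmem) (ne_of_lt hs₀lt)
  obtain ⟨g, γ, hgspan, hgs₀⟩ := exists_orth_functional haG hs₀nspan
  have hga : g a = γ := hgspan a (subset_affineSpan ℝ G haG)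
  have hgG : ∀ x ∈ G, g x = γ := fun x hx => hgspan x (subset_affineSpan ℝ G hx)
  -- round 1
  set Bp := S.filter (fun s => f s < c ∧ γ < g s) with hBp
  have hs₀Bp : s₀ ∈ Bp := Finset.mem_filter.mpr ⟨hs₀S, hs₀lt, by rw [hgs₀]; linarith⟩
  have hBpne : Bp.Nonempty := ⟨s₀, hs₀Bp⟩
  set t₀ := Bp.inf' hBpne (fun s => (c - f s) / (g s - γ)) with ht₀
  have ht₀pos : 0 < t₀ := by
    rw [ht₀, Finset.lt_inf'_iff]
    intro s hs
    obtain ⟨_, h1, h2⟩ := Finset.mem_filter.mp hs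
    exact div_pos (by linarith) (by linarith)
  set h : Euc n →ₗ[ℝ] ℝ := f + t₀ • g with hh
  set c'' : ℝ := c + t₀ * γ with hc''
  have hhval : ∀ x, h x = f x + t₀ * g x := fun x => by simp [hh]
  have hhS : ∀ s ∈ S, h s ≤ c'' := by
    intro s hs
    rcases eq_or_lt_of_le (hSle s hs) with heq | hlt
    · have : g s = γ := hgG s ⟨hmemP s hs, heq⟩
      rw [hhval, heq, this]
    · by_cases hgs : g s ≤ γ
      · rw [hhval]; nlinarith
      · push_neg at hgs
        have hsBp : s ∈ Bp := Finset.mem_filter.mpr ⟨hs, hlt, hgs⟩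
        have hle' : t₀ ≤ (c - f s) / (g s - γ) := Finset.inf'_le _ hsBp
        have : t₀ * (g s - γ) ≤ c - f s := by
          rw [← le_div_iff₀ (by linarith : (0:ℝ) < g s - γ)]; exact hle'
        rw [hhval]; nlinarith
  have hhP : ∀ x ∈ P, h x ≤ c'' := fun x hx => hull_bound hhS x (hS ▸ hx)
  have hhG : ∀ x ∈ G, h x = c'' := by
    intro x hx
    rw [hhval, hx.2, hgG x hx]
  -- achiever
  obtain ⟨m, hmBp, hmval⟩ := Finset.exists_mem_eq_inf' hBpne (fun s => (c - f s) / (g s - γ))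
  obtain ⟨hmS, hmlt, hmg⟩ := Finset.mem_filter.mp hmBp
  have hmach : h m = c'' := by
    have : t₀ * (g m - γ) = c - f m := by
      rw [ht₀, hmval, div_mul_cancel₀]
      linarith
    rw [hhval]; linarith
  by_cases hdeg : ∀ s ∈ S, f s < c → h s = c''
  · -- degenerate case: h constant on P
    have hconst : ∀ s ∈ S, h s = c'' := by
      intro s hs
      rcases eq_or_lt_of_le (hSle s hs) with heq | hlt
      · exact hhG s ⟨hmemP s hs, heq⟩
      · exact hdeg s hs hlt
    have hPconst : ∀ x ∈ P, h x = c'' := fun x hx => hull_const hconst (hS ▸ hx)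
    -- identity: f x + t₀ g x = c + t₀ γ on P
    have hkey : ∀ x ∈ P, t₀ * (g x - γ) = c - f x := by
      intro x hx
      have := hPconst x hx
      rw [hhval] at this
      linarith [this]
    have hgey : ∀ x ∈ P, γ ≤ g x := by
      intro x hx
      have h1 := hkey x hx
      have h2 := hle x hx
      nlinarith
    have hstrict : ∀ x ∈ P, f x < c → γ < g x := by
      intro x hx hfx
      have h1 := hkey x hx
      nlinarith
    -- round 2
    have hs₁ex : ∃ s₁ ∈ S, s₁ ∉ affineSpan ℝ (insert s₀ G) := by
      by_contra hno
      push_neg at hno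
      have hPs : P ⊆ (affineSpan ℝ (insert s₀ G) : Set (Euc n)) := by
        rw [hS]
        exact convexHull_min (fun s hs => hno s hs)
          (AffineSubspace.convex _)
      have hle2 : polyDim P ≤ polyDim (insert s₀ G) := by
        unfold polyDim
        exact Submodule.finrank_mono (AffineSubspace.direction_le
          (affineSpan_le.mpr hPs))
      have := polyDim_insert_le ⟨a, haG⟩ s₀
      omega
    obtain ⟨s₁, hs₁S, hs₁nspan⟩ := hs₁ex
    have haI : a ∈ insert s₀ G := Set.mem_insert_of_mem _ haG
    obtain ⟨g₂, γ₂, hg₂span, hg₂s₁⟩ := exists_orth_functional haI hs₁nspan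
    have hg₂G : ∀ x ∈ G, g₂ x = γ₂ := fun x hx =>
      hg₂span x (subset_affineSpan ℝ _ (Set.mem_insert_of_mem _ hx))
    have hg₂s₀ : g₂ s₀ = γ₂ := hg₂span s₀ (subset_affineSpan ℝ _ (Set.mem_insert _ _))
    have hs₁lt : f s₁ < c := by
      rcases eq_or_lt_of_le (hSle s₁ hs₁S) with heq | hlt
      · exfalso
        exact hs₁nspan (subset_affineSpan ℝ _
          (Set.mem_insert_of_mem _ (⟨hmemP s₁ hs₁S, heq⟩ : s₁ ∈ G)))
      · exact hlt
    set B₂p := S.filter (fun s => f s < c ∧ γ₂ < g₂ s) with hB₂p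
    have hs₁B : s₁ ∈ B₂p := Finset.mem_filter.mpr ⟨hs₁S, hs₁lt, by rw [hg₂s₁]; linarith⟩
    have hB₂ne : B₂p.Nonempty := ⟨s₁, hs₁B⟩
    set t₂ := B₂p.inf' hB₂ne (fun s => (g s - γ) / (g₂ s - γ₂)) with ht₂
    have ht₂pos : 0 < t₂ := by
      rw [ht₂, Finset.lt_inf'_iff]
      intro s hs
      obtain ⟨hsS, h1, h2⟩ := Finset.mem_filter.mp hs
      exact div_pos (by linarith [hstrict s (hmemP s hsS) h1]) (by linarith)
    set h₂ : Euc n →ₗ[ℝ] ℝ := t₂ • g₂ - g with hh₂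
    set c₂ : ℝ := t₂ * γ₂ - γ with hc₂
    have hh₂val : ∀ x, h₂ x = t₂ * g₂ x - g x := fun x => by simp [hh₂]
    have hh₂S : ∀ s ∈ S, h₂ s ≤ c₂ := by
      intro s hs
      rcases eq_or_lt_of_le (hSle s hs) with heq | hlt
      · have hsG : s ∈ G := ⟨hmemP s hs, heq⟩
        rw [hh₂val, hg₂G s hsG, hgG s hsG]
      · have hgs : γ < g s := hstrict s (hmemP s hs) hlt
        by_cases hg₂s : g₂ s ≤ γ₂
        · rw [hh₂val]; nlinarith
        · push_neg at hg₂s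
          have hsB : s ∈ B₂p := Finset.mem_filter.mpr ⟨hs, hlt, hg₂s⟩
          have hle' : t₂ ≤ (g s - γ) / (g₂ s - γ₂) := Finset.inf'_le _ hsB
          have : t₂ * (g₂ s - γ₂) ≤ g s - γ := by
            rw [← le_div_iff₀ (by linarith : (0:ℝ) < g₂ s - γ₂)]; exact hle'
          rw [hh₂val]; nlinarith
    have hh₂P : ∀ x ∈ P, h₂ x ≤ c₂ := fun x hx => hull_bound hh₂S x (hS ▸ hx)
    obtain ⟨m₂, hm₂B, hm₂val⟩ := Finset.exists_mem_eq_inf' hB₂ne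
      (fun s => (g s - γ) / (g₂ s - γ₂))
    obtain ⟨hm₂S, hm₂lt, hm₂g⟩ := Finset.mem_filter.mp hm₂B
    have hm₂ach : h₂ m₂ = c₂ := by
      have : t₂ * (g₂ m₂ - γ₂) = g m₂ - γ := by
        rw [ht₂, hm₂val, div_mul_cancel₀]
        linarith
      rw [hh₂val]; linarith
    have hs₀strict : h₂ s₀ < c₂ := by
      rw [hh₂val, hg₂s₀]
      have : γ < g s₀ := hstrict s₀ (hmemP s₀ hs₀S) hs₀lt
      linarith
    refine ⟨{x ∈ P | h₂ x = c₂}, Or.inr ⟨h₂, c₂, ?_, hh₂P, rfl⟩, ?_, ?_, ?_⟩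
    · -- h₂ ≠ 0
      intro h0
      have h1 : h₂ a = c₂ := by rw [hh₂val, hga, hg₂G a haG]
      rw [h0] at h1 hs₀strict
      simp only [LinearMap.zero_apply] at h1 hs₀strict
      linarith
    · intro x hx
      exact ⟨hx.1, by rw [hh₂val, hgG x hx, hg₂G x hx]⟩
    · intro heq
      have : s₀ ∈ {x ∈ P | h₂ x = c₂} := heq.symm ▸ hmemP s₀ hs₀S
      exact absurd this.2 (ne_of_lt hs₀strict)
    · intro heq
      have hm₂mem : m₂ ∈ {x ∈ P | h₂ x = c₂} := ⟨hmemP m₂ hm₂S, hm₂ach⟩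
      rw [heq] at hm₂mem
      exact absurd hm₂mem.2 (ne_of_lt hm₂lt)
  · -- non-degenerate case
    push_neg at hdeg
    obtain ⟨s', hs'S, hs'lt, hs'ne⟩ := hdeg
    have hs'strict : h s' < c'' := lt_of_le_of_ne (hhS s' hs'S) hs'ne
    refine ⟨{x ∈ P | h x = c''}, Or.inr ⟨h, c'', ?_, hhP, rfl⟩, ?_, ?_, ?_⟩
    · intro h0
      have h1 : h a = c'' := hhG a haG
      rw [h0] at h1 hs'strict
      simp only [LinearMap.zero_apply] at h1 hs'strict
      linarith
    · intro x hx
      exact ⟨hx.1, hhG x hx⟩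
    · intro heq
      have : s' ∈ {x ∈ P | h x = c''} := heq.symm ▸ hmemP s' hs'S
      exact absurd this.2 (ne_of_lt hs'strict)
    · intro heq
      have hmmem : m ∈ {x ∈ P | h x = c''} := ⟨hmemP m hmS, hmach⟩
      rw [heq] at hmmem
      exact absurd hmmem.2 (ne_of_lt hmlt)

/-- every proper nonempty face is contained in a facet -/
lemma exists_facet {P : Set (Euc n)} (hP : IsPolytope P) :
    ∀ (k : ℕ) (G : Set (Euc n)), polyDim P - polyDim G ≤ k → IsFaceOf P G →
      G.Nonempty → G ≠ P → ∃ F, IsFacetOf P F ∧ G ⊆ F := by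
  intro k
  induction k with
  | zero =>
    intro G hk hface hne hGP
    rcases face_dim_lt hP hface hne with heq | hlt
    · exact absurd heq hGP
    · omega
  | succ k ih =>
    intro G hk hface hne hGP
    have hlt : polyDim G < polyDim P := by
      rcases face_dim_lt hP hface hne with heq | hlt
      · exact absurd heq hGP
      · exact hlt
    by_cases hco : polyDim G + 2 ≤ polyDim P
    · -- grow
      obtain ⟨S, hS⟩ := hP
      rcases hface with heqP | ⟨f, c, hf0, hle, hGrep⟩
      · exact absurd heqP hGP
      subst hGrep
      obtain ⟨G', hface', hsub', hne', hneq'⟩ := growth hS hle hne hGP hco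
      have hG'ne : G'.Nonempty := hne.mono hsub'
      -- G is a face of G'
      have hfaceGG' : IsFaceOf G' {x ∈ P | f x = c} := by
        refine Or.inr ⟨f, c, hf0, fun x hx => hle x (hface'.subset hx), ?_⟩
        apply Set.Subset.antisymm
        · intro x hx; exact ⟨hsub' hx, hx.2⟩
        · intro x hx; exact ⟨hface'.subset hx.1, hx.2⟩
      have hG'poly : IsPolytope G' := by
        obtain ⟨T, _, hT⟩ := face_polytope hS hface'
        exact ⟨T, hT⟩
      have hdimlt : polyDim {x ∈ P | f x = c} < polyDim G' := by
        rcases face_dim_lt hG'poly hfaceGG' hne with heq | hlt'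
        · exact absurd heq (Ne.symm hneq')
        · exact hlt'
      have hdimlt' : polyDim G' < polyDim P := by
        rcases face_dim_lt ⟨S, hS⟩ hface' hG'ne with heq | hlt'
        · exact absurd heq hne'
        · exact hlt'
      obtain ⟨F, hF, hsubF⟩ := ih G' (by omega) hface' hG'ne hne'
      exact ⟨F, hF, hsub'.trans hsubF⟩
    · exact ⟨G, ⟨hface, hne, by omega⟩, le_refl _⟩

set_option maxHeartbeats 2000000 in
/-- every nonempty face of dimension ≤ 1 of a polytope of dimension ≥ 3 lies in two
distinct facets -/
lemma two_facets {S : Finset (Euc n)} {P : Set (Euc n)}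
    (hS : P = convexHull ℝ (S : Set (Euc n))) {e : Set (Euc n)}
    (hface : IsFaceOf P e) (hene : e.Nonempty) (hedim : polyDim e ≤ 1)
    (hPdim : 3 ≤ polyDim P) :
    ∃ F₁ F₂, IsFacetOf P F₁ ∧ IsFacetOf P F₂ ∧ e ⊆ F₁ ∧ e ⊆ F₂ ∧ F₁ ≠ F₂ := by
  have hmemP : ∀ s ∈ S, s ∈ P := fun s hs => hS ▸ subset_convexHull ℝ _ hs
  have heP : e ≠ P := by
    intro h; rw [h] at hedim; omega
  obtain ⟨F₁, hF₁, heF₁⟩ := exists_facet ⟨S, hS⟩ (polyDim P) e (by omega) hface hene heP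
  obtain ⟨hF₁face, hF₁ne, hF₁dim⟩ := hF₁
  have hF₁P : F₁ ≠ P := by
    intro h; rw [h] at hF₁dim; omega
  rcases hF₁face with h | ⟨f₁, c₁, hf₁0, hle₁, hF₁rep⟩
  · exact absurd h hF₁P
  rcases hface with h | ⟨fe, ce, hfe0, hlee, herep⟩
  · exact absurd h heP
  -- B₁ nonempty
  have hB₁ex : ∃ s ∈ S, f₁ s < c₁ := by
    by_contra hno
    push_neg at hno
    apply hF₁P
    rw [hF₁rep]
    apply Set.Subset.antisymm (Set.sep_subset _ _)
    intro x hxP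
    exact ⟨hxP, hull_const
      (fun s hs => le_antisymm (hle₁ s (hmemP s hs)) (hno s hs)) (hS ▸ hxP)⟩
  obtain ⟨sb, hsbS, hsblt⟩ := hB₁ex
  set B₁ := S.filter (fun s => f₁ s < c₁) with hB₁
  have hsbB : sb ∈ B₁ := Finset.mem_filter.mpr ⟨hsbS, hsblt⟩
  have hB₁ne : B₁.Nonempty := ⟨sb, hsbB⟩
  -- cross-values on B₁
  have hBe : ∀ s ∈ B₁, fe s < ce := by
    intro s hs
    obtain ⟨hsS, hslt⟩ := Finset.mem_filter.mp hs
    rcases eq_or_lt_of_le (hlee s (hmemP s hsS)) with heq | hlt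
    · exfalso
      have : s ∈ e := herep ▸ ⟨hmemP s hsS, heq⟩
      have : s ∈ F₁ := heF₁ this
      rw [hF₁rep] at this
      exact absurd this.2 (ne_of_lt hslt)
    · exact hlt
  set t : ℝ := B₁.inf' hB₁ne (fun s => (ce - fe s) / (c₁ - f₁ s)) with ht
  have htpos : 0 < t := by
    rw [ht, Finset.lt_inf'_iff]
    intro s hs
    obtain ⟨_, h1⟩ := Finset.mem_filter.mp hs
    exact div_pos (by linarith [hBe s hs]) (by linarith)
  set h : Euc n →ₗ[ℝ] ℝ := fe - t • f₁ with hh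
  set cstar : ℝ := ce - t * c₁ with hc
  have hhval : ∀ x, h x = fe x - t * f₁ x := fun x => by simp [hh]
  have hhS : ∀ s ∈ S, h s ≤ cstar := by
    intro s hs
    rcases eq_or_lt_of_le (hle₁ s (hmemP s hs)) with heq | hlt
    · rw [hhval, heq]
      have := hlee s (hmemP s hs)
      linarith
    · have hsB : s ∈ B₁ := Finset.mem_filter.mpr ⟨hs, hlt⟩
      have hle' : t ≤ (ce - fe s) / (c₁ - f₁ s) := Finset.inf'_le _ hsB
      have : t * (c₁ - f₁ s) ≤ ce - fe s := by
        rw [← le_div_iff₀ (by linarith : (0:ℝ) < c₁ - f₁ s)]; exact hle'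
      rw [hhval]; nlinarith
  have hhP : ∀ x ∈ P, h x ≤ cstar := fun x hx => hull_bound hhS x (hS ▸ hx)
  have hhe : ∀ x ∈ e, h x = cstar := by
    intro x hx
    have hxe := herep ▸ hx
    have hxF₁ := hF₁rep ▸ heF₁ hx
    rw [hhval, hxe.2, hxF₁.2]
  obtain ⟨m, hmB, hmval⟩ := Finset.exists_mem_eq_inf' hB₁ne
    (fun s => (ce - fe s) / (c₁ - f₁ s))
  obtain ⟨hmS, hmlt⟩ := Finset.mem_filter.mp hmB
  have hmach : h m = cstar := by
    have : t * (c₁ - f₁ m) = ce - fe m := by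
      rw [ht, hmval, div_mul_cancel₀]
      linarith
    rw [hhval]; linarith
  -- interior point of F₁ not in e
  have hsint : ∃ s ∈ S, f₁ s = c₁ ∧ fe s < ce := by
    by_contra hno
    push_neg at hno
    have hsub : F₁ ⊆ e := by
      rw [hF₁rep, face_carrier hS hle₁, herep]
      have hconv : Convex ℝ {x ∈ P | fe x = ce} := by
        have h1 : Convex ℝ P := hS ▸ convex_convexHull ℝ _
        have h2 : Convex ℝ {x | fe x = ce} := convex_hyperplane ⟨fe.map_add, fe.map_smul⟩ ce
        exact h1.inter h2
      apply convexHull_min _ hconv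
      intro s hs
      obtain ⟨hsS, hsval⟩ := Finset.mem_filter.mp hs
      have hsle := hlee s (hmemP s hsS)
      rcases eq_or_lt_of_le hsle with heq | hlt
      · exact ⟨hmemP s hsS, heq⟩
      · exact absurd hlt (not_lt.mpr (hno s hsS hsval))
    have := polyDim_mono hsub
    omega
  obtain ⟨si, hsiS, hsif₁, hsife⟩ := hsint
  have hsistrict : h si < cstar := by
    rw [hhval, hsif₁]; linarith
  obtain ⟨ae, haee⟩ := hene
  have haec : h ae = cstar := hhe ae haee
  -- build the second face
  have hG₂face : IsFaceOf P {x ∈ P | h x = cstar} := by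
    refine Or.inr ⟨h, cstar, ?_, hhP, rfl⟩
    intro h0
    rw [h0] at haec hsistrict
    simp only [LinearMap.zero_apply] at haec hsistrict
    linarith
  have heG₂ : e ⊆ {x ∈ P | h x = cstar} := fun x hx => ⟨(herep ▸ hx).1, hhe x hx⟩
  have hG₂ne : {x ∈ P | h x = cstar}.Nonempty := ⟨ae, heG₂ haee⟩
  have hG₂P : {x ∈ P | h x = cstar} ≠ P := by
    intro heq
    have : si ∈ {x ∈ P | h x = cstar} := heq.symm ▸ hmemP si hsiS
    exact absurd this.2 (ne_of_lt hsistrict)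
  obtain ⟨F₂, hF₂, hsubF₂⟩ := exists_facet ⟨S, hS⟩ (polyDim P) _ (by omega) hG₂face hG₂ne hG₂P
  refine ⟨F₁, F₂, ⟨Or.inr ⟨f₁, c₁, hf₁0, hle₁, hF₁rep⟩, hF₁ne, hF₁dim⟩, hF₂,
    heF₁, heG₂.trans hsubF₂, ?_⟩
  intro heq
  have hmG₂ : m ∈ {x ∈ P | h x = cstar} := ⟨hmemP m hmS, hmach⟩
  have hmF₁ : m ∈ F₁ := heq ▸ hsubF₂ hmG₂
  rw [hF₁rep] at hmF₁
  exact absurd hmF₁.2 (ne_of_lt hmlt)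

lemma vertexOf_of_face {P F : Set (Euc n)} {v : Euc n} (hP : IsPolytope P)
    (hF : IsFaceOf P F) (hv : IsVertexOf F v) : IsVertexOf P v :=
  face_trans hP hF hv

lemma vertexOf_face_of_mem {P F : Set (Euc n)} {v : Euc n} (hv : IsVertexOf P v)
    (hvF : v ∈ F) (hF : IsFaceOf P F) : IsVertexOf F v := by
  rcases hv with h | ⟨f, c, hf0, hle, hrep⟩
  · -- {v} = P
    have : F = {v} := Set.Subset.antisymm (h ▸ hF.subset) (Set.singleton_subset_iff.mpr hvF)
    exact Or.inl this.symm
  · refine Or.inr ⟨f, c, hf0, fun x hx => hle x (hF.subset hx), ?_⟩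
    apply Set.Subset.antisymm
    · intro x hx
      rw [Set.mem_singleton_iff.mp hx]
      have : v ∈ ({v} : Set (Euc n)) := rfl
      rw [hrep] at this
      exact ⟨hvF, this.2⟩
    · intro x hx
      have : x ∈ {y ∈ P | f y = c} := ⟨hF.subset hx.1, hx.2⟩
      rw [← hrep] at this
      exact this

set_option maxHeartbeats 1000000 in
/-- in a simplex facet (a polytope with dim+1 vertices), any two distinct vertices form
an edge -/
lemma pair_face_of_simplex {F : Set (Euc n)} (hFpoly : IsPolytope F)
    (hcard : {v | IsVertexOf F v}.ncard = polyDim F + 1) (hdim : 2 ≤ polyDim F)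
    {p q : Euc n} (hp : IsVertexOf F p) (hq : IsVertexOf F q) (hpq : p ≠ q) :
    IsFaceOf F (segment ℝ p q) := by
  set V := {v | IsVertexOf F v} with hV
  have hfin : V.Finite := vertexSet_finite hFpoly
  have hFV : F = convexHull ℝ V := conv_vertices hFpoly
  set Vf := hfin.toFinset with hVf
  have hVfcoe : (Vf : Set (Euc n)) = V := hfin.coe_toFinset
  have hFVf : F = convexHull ℝ (Vf : Set (Euc n)) := by rw [hVfcoe]; exact hFV
  have hcardVf : Vf.card = polyDim F + 1 := by
    rw [← Set.ncard_coe_finset, hVfcoe, hcard]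
  -- affine independence
  haveI : Fintype ↥Vf := FinsetCoe.fintype Vf
  have hcardty : Fintype.card ↥Vf = polyDim F + 1 := by
    rw [Fintype.card_coe]; exact hcardVf
  have hrange : Set.range (Subtype.val : ↥Vf → Euc n) = (Vf : Set (Euc n)) :=
    Subtype.range_coe
  have hai : AffineIndependent ℝ (Subtype.val : ↥Vf → Euc n) := by
    rw [affineIndependent_iff_finrank_vectorSpan_eq (k := ℝ) _ hcardty, hrange]
    have : affineSpan ℝ F = affineSpan ℝ (Vf : Set (Euc n)) := by
      rw [hFVf, affineSpan_convexHull]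
    unfold polyDim
    rw [← direction_affineSpan, ← this]
  -- indices
  have hpV : p ∈ Vf := by rw [← Finset.mem_coe, hVfcoe]; exact hp
  have hqV : q ∈ Vf := by rw [← Finset.mem_coe, hVfcoe]; exact hq
  set i₀ : ↥Vf := ⟨p, hpV⟩ with hi₀
  set i₁ : ↥Vf := ⟨q, hqV⟩ with hi₁
  have hi01 : i₁ ≠ i₀ := fun h => hpq (congrArg Subtype.val h).symm
  have hli := (affineIndependent_iff_linearIndependent_vsub ℝ _ i₀).mp hai
  set W : Submodule ℝ (Euc n) :=
    Submodule.span ℝ (Set.range fun i : {x : ↥Vf // x ≠ i₀} => ((i : ↥Vf) : Euc n) - p)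
    with hW
  have hliW : LinearIndependent ℝ (fun i : {x : ↥Vf // x ≠ i₀} => ((i : ↥Vf) : Euc n) - p) := by
    exact hli
  set b : Module.Basis {x : ↥Vf // x ≠ i₀} ℝ W := Module.Basis.span hliW with hb
  set φ : W →ₗ[ℝ] ℝ := b.constr ℝ (fun i => if (i : ↥Vf) = i₁ then (0:ℝ) else (-1:ℝ)) with hφ
  set Ψ : Euc n →ₗ[ℝ] ℝ := φ ∘ₗ (W.orthogonalProjection).toLinearMap with hΨ
  have hΨW : ∀ (x : Euc n) (hx : x ∈ W), Ψ x = φ ⟨x, hx⟩ := by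
    intro x hx
    rw [hΨ]
    simp only [LinearMap.coe_comp, Function.comp_apply, ContinuousLinearMap.coe_coe]
    congr 1
    exact Subtype.ext (W.starProjection_eq_self_iff.mpr hx)
  have hΨval : ∀ (i : {x : ↥Vf // x ≠ i₀}),
      Ψ (((i : ↥Vf) : Euc n) - p) = if (i : ↥Vf) = i₁ then (0:ℝ) else (-1:ℝ) := by
    intro i
    have hmem : (((i : ↥Vf) : Euc n) - p) ∈ W :=
      Submodule.subset_span (Set.mem_range_self i)
    rw [hΨW _ hmem]
    have : (⟨((i : ↥Vf) : Euc n) - p, hmem⟩ : W) = b i :=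
      Subtype.ext (by rw [hb]; exact congrArg Subtype.val (Module.Basis.span_apply hliW i).symm)
    rw [this, hφ, Module.Basis.constr_basis]
  -- values on vertices
  set c : ℝ := Ψ p with hc
  have hvert_val : ∀ u ∈ Vf, Ψ u = if u = p ∨ u = q then c else c - 1 := by
    intro u huV
    by_cases hup : u = p
    · rw [hup]; simp [hc]
    · have : Ψ u = Ψ (u - p) + c := by rw [map_sub]; ring
      set iu : {x : ↥Vf // x ≠ i₀} := ⟨⟨u, huV⟩, fun h => hup (congrArg Subtype.val h)⟩
      have hval := hΨval iu
      by_cases huq : u = q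
      · have : (iu : ↥Vf) = i₁ := Subtype.ext huq
        rw [this] at hval
        simp only [if_true, ite_true, eq_self_iff_true] at hval
        rw [if_pos (Or.inr huq)]
        have h2 : Ψ u - Ψ p = 0 := by rw [huq]; simpa using hval
        rw [hc]; linarith [h2]
      · have : (iu : ↥Vf) ≠ i₁ := fun h => huq (congrArg Subtype.val h)
        rw [if_neg this] at hval
        rw [if_neg (by push_neg; exact ⟨hup, huq⟩)]
        rw [map_sub] at hval
        rw [hc]; linarith [hval]
  have hSle : ∀ u ∈ Vf, Ψ u ≤ c := by
    intro u hu
    rw [hvert_val u hu]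
    split
    · exact le_refl _
    · linarith
  have hbound : ∀ x ∈ F, Ψ x ≤ c := by
    intro x hx
    exact hull_bound hSle x (hFVf ▸ hx)
  -- the face is the segment
  have hfilter : Vf.filter (fun s => Ψ s = c) = {p, q} := by
    ext u
    simp only [Finset.mem_filter, Finset.mem_insert, Finset.mem_singleton]
    constructor
    · rintro ⟨huV, hval⟩
      rw [hvert_val u huV] at hval
      by_contra hcon
      push_neg at hcon
      rw [if_neg (by push_neg; exact hcon)] at hval
      linarith
    · rintro (rfl | rfl)
      · exact ⟨hpV, by rw [hvert_val _ hpV, if_pos (Or.inl rfl)]⟩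
      · exact ⟨hqV, by rw [hvert_val _ hqV, if_pos (Or.inr rfl)]⟩
  have hface_eq : {x ∈ F | Ψ x = c} = segment ℝ p q := by
    rw [face_carrier hFVf hbound, hfilter]
    have : (({p, q} : Finset (Euc n)) : Set (Euc n)) = {p, q} := by simp
    rw [this, convexHull_pair]
  -- Ψ ≠ 0
  have hΨne : Ψ ≠ 0 := by
    -- third vertex
    have hcard3 : 2 ≤ ((Vf.erase p).erase q).card + 2 ∧ 1 ≤ ((Vf.erase p).erase q).card := by
      constructor
      · omega
      · have h1 : (Vf.erase p).card = Vf.card - 1 := Finset.card_erase_of_mem hpV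
        have hq' : q ∈ Vf.erase p := Finset.mem_erase.mpr ⟨Ne.symm hpq, hqV⟩
        have h2 : ((Vf.erase p).erase q).card = (Vf.erase p).card - 1 :=
          Finset.card_erase_of_mem hq'
        omega
    obtain ⟨u', hu'⟩ := Finset.card_pos.mp (by omega : 0 < ((Vf.erase p).erase q).card)
    obtain ⟨hu'q, hu'rest⟩ := Finset.mem_erase.mp hu'
    obtain ⟨hu'p, hu'V⟩ := Finset.mem_erase.mp hu'rest
    intro h0
    have := hvert_val u' hu'V
    rw [h0] at this
    simp only [LinearMap.zero_apply] at this
    rw [if_neg (by push_neg; exact ⟨hu'p, hu'q⟩)] at this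
    have hcval := hvert_val p hpV
    rw [h0] at hcval
    simp only [LinearMap.zero_apply, eq_self_iff_true, true_or, if_true, ite_true] at hcval
    linarith
  exact Or.inr ⟨Ψ, c, hΨne, hbound, hface_eq.symm⟩

set_option maxHeartbeats 1000000 in
/-- adjacent vertices of a simplicial d-polytope have at least d-1 common neighbours -/
lemma common_nbrs {d : ℕ} (hd : 4 ≤ d) {P : Set (Euc n)} (hP : IsSimplicialPolytope P d)
    (w v : {v : Euc n // IsVertexOf P v}) (hadj : (polytopeGraph P).Adj w v) :
    d - 1 ≤ {u : {v : Euc n // IsVertexOf P v} |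
      (polytopeGraph P).Adj w u ∧ (polytopeGraph P).Adj v u}.ncard := by
  obtain ⟨hpoly, hdim, hsimp⟩ := hP
  obtain ⟨S, hS⟩ := hpoly
  obtain ⟨hwv, he⟩ := hadj
  have hwe : (w : Euc n) ∈ segment ℝ (w : Euc n) (v : Euc n) := left_mem_segment ℝ _ _
  have hve : (v : Euc n) ∈ segment ℝ (w : Euc n) (v : Euc n) := right_mem_segment ℝ _ _
  obtain ⟨F₁, F₂, hF₁, hF₂, heF₁, heF₂, hF₁₂⟩ :=
    two_facets hS he ⟨_, hwe⟩ (polyDim_segment_le _ _) (by omega)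
  -- vertex sets of the facets
  have keyfacts : ∀ F, IsFacetOf P F →
      (IsPolytope F ∧ F = convexHull ℝ {x | IsVertexOf F x} ∧
        {x | IsVertexOf F x}.ncard = d ∧ {x | IsVertexOf F x}.Finite ∧
        polyDim F + 1 = d) := by
    intro F hF
    have hFpoly : IsPolytope F := by
      obtain ⟨T, _, hT⟩ := face_polytope hS hF.1
      exact ⟨T, hT⟩
    exact ⟨hFpoly, conv_vertices hFpoly, hsimp F hF, vertexSet_finite hFpoly,
      by rw [← hdim]; exact hF.2.2⟩
  obtain ⟨hF₁poly, hF₁V, hV₁card, hV₁fin, hF₁dim⟩ := keyfacts F₁ hF₁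
  obtain ⟨hF₂poly, hF₂V, hV₂card, hV₂fin, hF₂dim⟩ := keyfacts F₂ hF₂
  set V₁ := {x | IsVertexOf F₁ x} with hV₁
  set V₂ := {x | IsVertexOf F₂ x} with hV₂
  -- w, v are vertices of each facet
  have hwV : ∀ F, IsFacetOf P F → segment ℝ (w : Euc n) (v : Euc n) ⊆ F →
      IsVertexOf F (w : Euc n) ∧ IsVertexOf F (v : Euc n) := by
    intro F hF hsub
    exact ⟨vertexOf_face_of_mem w.2 (hsub hwe) hF.1, vertexOf_face_of_mem v.2 (hsub hve) hF.1⟩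
  obtain ⟨hwV₁, hvV₁⟩ := hwV F₁ hF₁ heF₁
  obtain ⟨hwV₂, hvV₂⟩ := hwV F₂ hF₂ heF₂
  -- V₁ ≠ V₂
  have hV₁₂ : V₁ ≠ V₂ := by
    intro heq
    apply hF₁₂
    rw [hF₁V, hF₂V, heq]
  -- |V₁ ∪ V₂| ≥ d + 1
  have huge : d + 1 ≤ (V₁ ∪ V₂).ncard := by
    have hnss : ¬ (V₁ ⊆ V₂) := by
      intro hss
      exact hV₁₂ (Set.eq_of_subset_of_ncard_le hss (by omega) hV₂fin)
    obtain ⟨x, hx1, hx2⟩ := Set.not_subset.mp hnss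
    calc d + 1 = V₂.ncard + 1 := by rw [hV₂card]
      _ = (insert x V₂).ncard := (Set.ncard_insert_of_notMem hx2 hV₂fin).symm
      _ ≤ (V₁ ∪ V₂).ncard := Set.ncard_le_ncard
          (Set.insert_subset (Or.inl hx1) Set.subset_union_right)
          (hV₁fin.union hV₂fin)
  set C₀ := (V₁ ∪ V₂) \ {(w : Euc n), (v : Euc n)} with hC₀
  have hC₀card : d - 1 ≤ C₀.ncard := by
    have hsub : V₁ ∪ V₂ ⊆ C₀ ∪ {(w : Euc n), (v : Euc n)} := by
      intro x hx
      by_cases hx2 : x ∈ ({(w : Euc n), (v : Euc n)} : Set (Euc n))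
      · exact Or.inr hx2
      · exact Or.inl ⟨hx, hx2⟩
    have h1 : (V₁ ∪ V₂).ncard ≤ C₀.ncard + 2 := by
      calc (V₁ ∪ V₂).ncard ≤ (C₀ ∪ {(w : Euc n), (v : Euc n)}).ncard :=
            Set.ncard_le_ncard hsub (Set.Finite.union
              (((hV₁fin.union hV₂fin)).diff) ((Set.finite_singleton _).insert _))
        _ ≤ C₀.ncard + ({(w : Euc n), (v : Euc n)} : Set (Euc n)).ncard :=
            Set.ncard_union_le _ _
        _ ≤ C₀.ncard + 2 := by
            have := Set.ncard_insert_le (w : Euc n) ({(v : Euc n)} : Set (Euc n))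
            simp only [Set.ncard_singleton] at this
            omega
    omega
  -- every element of C₀ is a common neighbour
  have hmain : C₀ ⊆ Subtype.val '' {u : {v : Euc n // IsVertexOf P v} |
      (polytopeGraph P).Adj w u ∧ (polytopeGraph P).Adj v u} := by
    rintro x ⟨hxU, hxwv⟩
    have hxw : x ≠ (w : Euc n) := fun h => hxwv (h ▸ Or.inl rfl)
    have hxv : x ≠ (v : Euc n) := fun h => hxwv (h ▸ Or.inr rfl)
    have hadj2 : ∀ F, IsFacetOf P F → IsVertexOf F x →
        IsVertexOf F (w : Euc n) → IsVertexOf F (v : Euc n) →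
        IsVertexOf P x ∧ IsFaceOf P (segment ℝ (w : Euc n) x) ∧
          IsFaceOf P (segment ℝ (v : Euc n) x) := by
      intro F hF hxF hwF hvF
      obtain ⟨hFpoly, hFV, hVcard, hVfin, hFdim⟩ := keyfacts F hF
      have hcard' : {y | IsVertexOf F y}.ncard = polyDim F + 1 := by omega
      have hdim' : 2 ≤ polyDim F := by omega
      refine ⟨vertexOf_of_face ⟨S, hS⟩ hF.1 hxF, ?_, ?_⟩
      · exact face_trans ⟨S, hS⟩ hF.1
          (pair_face_of_simplex hFpoly hcard' hdim' hwF hxF (Ne.symm hxw))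
      · exact face_trans ⟨S, hS⟩ hF.1
          (pair_face_of_simplex hFpoly hcard' hdim' hvF hxF (Ne.symm hxv))
    rcases hxU with hx1 | hx2
    · obtain ⟨hvert, hw', hv'⟩ := hadj2 F₁ hF₁ hx1 hwV₁ hvV₁
      exact ⟨⟨x, hvert⟩, ⟨⟨fun h => hxw (congrArg Subtype.val h).symm, hw'⟩,
        ⟨fun h => hxv (congrArg Subtype.val h).symm, hv'⟩⟩, rfl⟩
    · obtain ⟨hvert, hw', hv'⟩ := hadj2 F₂ hF₂ hx2 hwV₂ hvV₂
      exact ⟨⟨x, hvert⟩, ⟨⟨fun h => hxw (congrArg Subtype.val h).symm, hw'⟩,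
        ⟨fun h => hxv (congrArg Subtype.val h).symm, hv'⟩⟩, rfl⟩
  -- conclude
  haveI : Finite {v : Euc n // IsVertexOf P v} := (vertexSet_finite ⟨S, hS⟩).to_subtype
  calc d - 1 ≤ C₀.ncard := hC₀card
    _ ≤ (Subtype.val '' {u : {v : Euc n // IsVertexOf P v} |
          (polytopeGraph P).Adj w u ∧ (polytopeGraph P).Adj v u}).ncard :=
        Set.ncard_le_ncard hmain (Set.toFinite _)
    _ = _ := Set.ncard_image_of_injective _ Subtype.val_injective

lemma cutEdges_compl {V : Type*} (G : SimpleGraph V) (X : Set V) :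
    cutEdges G Xᶜ = cutEdges G X := by
  ext e
  constructor
  · rintro ⟨x, y, hadj, hx, hy, rfl⟩
    exact ⟨y, x, hadj.symm, by simpa using hy, by simpa using hx, Sym2.eq_swap⟩
  · rintro ⟨x, y, hadj, hx, hy, rfl⟩
    exact ⟨y, x, hadj.symm, by simpa using hy, by simpa using hx, Sym2.eq_swap⟩

set_option maxHeartbeats 1000000 in
lemma main_half {d : ℕ} (hd : 4 ≤ d) {P : Set (Euc n)} (hP : IsSimplicialPolytope P d)
    (X : Set {v : Euc n // IsVertexOf P v})
    (D : Set (Sym2 {v : Euc n // IsVertexOf P v}))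
    (hDX : D = cutEdges (polytopeGraph P) X) :
    ∀ w ∈ X ∩ cutVerts D,
      1 ≤ ((polytopeGraph P).neighborSet w ∩ Xᶜ).ncard →
      ((polytopeGraph P).neighborSet w ∩ Xᶜ).ncard ≤ d - 2 →
      ∀ v ∈ (polytopeGraph P).neighborSet w ∩ Xᶜ,
        d + 1 - ((polytopeGraph P).neighborSet w ∩ Xᶜ).ncard ≤ {e ∈ D | v ∈ e}.ncard := by
  haveI : Finite {v : Euc n // IsVertexOf P v} := (vertexSet_finite hP.1).to_subtype
  intro w hw h1 h2 v hv
  obtain ⟨hadj, hvX⟩ := hv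
  rw [SimpleGraph.mem_neighborSet] at hadj
  have hwX : w ∈ X := hw.1
  set k := ((polytopeGraph P).neighborSet w ∩ Xᶜ).ncard with hk
  set CN := {u : {v : Euc n // IsVertexOf P v} |
      (polytopeGraph P).Adj w u ∧ (polytopeGraph P).Adj v u} with hCN
  have hCNcard : d - 1 ≤ CN.ncard := common_nbrs hd hP w v hadj
  set CX := CN ∩ X with hCX
  set CXc := CN ∩ Xᶜ with hCXc
  have fact1 : CN.ncard ≤ CX.ncard + CXc.ncard := by
    calc CN.ncard ≤ (CX ∪ CXc).ncard := Set.ncard_le_ncard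
          (by intro u hu; by_cases h : u ∈ X
              · exact Or.inl ⟨hu, h⟩
              · exact Or.inr ⟨hu, h⟩)
          (Set.toFinite _)
      _ ≤ CX.ncard + CXc.ncard := Set.ncard_union_le _ _
  have hvCN : v ∉ CXc := fun h => (polytopeGraph P).loopless.irrefl v h.1.2
  have fact2 : CXc.ncard + 1 ≤ k := by
    have hsub : insert v CXc ⊆ (polytopeGraph P).neighborSet w ∩ Xᶜ := by
      intro u hu
      rcases hu with rfl | hu
      · exact ⟨hadj, hvX⟩
      · exact ⟨hu.1.1, hu.2⟩
    calc CXc.ncard + 1 = (insert v CXc).ncard :=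
          (Set.ncard_insert_of_notMem hvCN (Set.toFinite _)).symm
      _ ≤ k := Set.ncard_le_ncard hsub (Set.toFinite _)
  have hwCN : w ∉ CX := fun h => (polytopeGraph P).loopless.irrefl w h.1.1
  have fact3 : CX.ncard + 1 ≤ {e ∈ D | v ∈ e}.ncard := by
    have hmap : ∀ u ∈ insert w CX, s(u, v) ∈ {e ∈ D | v ∈ e} := by
      intro u hu
      have hadju : (polytopeGraph P).Adj u v := by
        rcases hu with rfl | hu
        · exact hadj
        · exact hu.1.2.symm
      have huX : u ∈ X := by
        rcases hu with rfl | hu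
        · exact hwX
        · exact hu.2
      refine ⟨hDX ▸ ⟨u, v, hadju, huX, hvX, rfl⟩, Sym2.mem_mk_right _ _⟩
    have hinj : Set.InjOn (fun u => s(u, v)) (insert w CX) := by
      intro u₁ hu₁ u₂ hu₂ heq
      simp only [Sym2.eq, Sym2.rel_iff', Prod.mk.injEq, Prod.swap_prod_mk] at heq
      rcases heq with ⟨h, _⟩ | ⟨hh1, hh2⟩
      · exact h
      · exfalso
        rcases hu₁ with rfl | hu₁
        · exact hadj.ne hh1
        · exact hu₁.1.2.ne' hh1
    calc CX.ncard + 1 = (insert w CX).ncard :=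
          (Set.ncard_insert_of_notMem hwCN (Set.toFinite _)).symm
      _ ≤ {e ∈ D | v ∈ e}.ncard :=
          Set.ncard_le_ncard_of_injOn _ hmap hinj (Set.toFinite _)
  omega


/-- Let `d ≥ 4`, let `P` be a simplicial `d`-polytope with graph `G`, and
let `D = E(X, X̄)` be a nontrivial minimum edge cut of `G`. For every vertex `w ∈ X`
incident with an edge of `D` such that `1 ≤ |N_X̄(w)| ≤ d - 2`, every vertex of `N_X̄(w)`
is incident with at least `d + 1 - |N_X̄(w)|` edges of `D`; and symmetrically for vertices
`z ∈ V(G) ∖ X`. -/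
theorem cross_neighbours_incident_many_cut_edges {n d : ℕ} (hd : 4 ≤ d)
    (P : Set (Euc n)) (hP : IsSimplicialPolytope P d)
    (X : Set {v : Euc n // IsVertexOf P v})
    (D : Set (Sym2 {v : Euc n // IsVertexOf P v}))
    (hDX : D = cutEdges (polytopeGraph P) X)
    (hmin : IsMinEdgeCut (polytopeGraph P) D)
    (hnt : ¬ IsTrivialEdgeCut (polytopeGraph P) D) :
    (∀ w ∈ X ∩ cutVerts D,
      1 ≤ ((polytopeGraph P).neighborSet w ∩ Xᶜ).ncard →
      ((polytopeGraph P).neighborSet w ∩ Xᶜ).ncard ≤ d - 2 →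
      ∀ v ∈ (polytopeGraph P).neighborSet w ∩ Xᶜ,
        d + 1 - ((polytopeGraph P).neighborSet w ∩ Xᶜ).ncard ≤ {e ∈ D | v ∈ e}.ncard) ∧
    (∀ z ∈ Xᶜ ∩ cutVerts D,
      1 ≤ ((polytopeGraph P).neighborSet z ∩ X).ncard →
      ((polytopeGraph P).neighborSet z ∩ X).ncard ≤ d - 2 →
      ∀ u ∈ (polytopeGraph P).neighborSet z ∩ X,
        d + 1 - ((polytopeGraph P).neighborSet z ∩ X).ncard ≤ {e ∈ D | u ∈ e}.ncard) := by
  constructor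
  · exact main_half hd hP X D hDX
  · have hDX' : D = cutEdges (polytopeGraph P) Xᶜ := by rw [hDX, cutEdges_compl]
    have h := main_half hd hP Xᶜ D hDX'
    rwa [compl_compl] at h

end
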